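/- Explicit test-function lower bound on the reference tetrahedron, curl case (inequality (4.7) in the proof of Lemma 4.1): For every integer r ≥ 1 there exists a constant C > 0, depending only on r, such that for every q ∈ P_{r−1}(K̂)³, the function v = Σ_{i=1}^{3} (n_i·q) b_i^{curl} satisfies ∫_{K̂} v·q dx ≥ C ∫_{K̂} |q|² dx. Equivalently, ∫_{K̂} [λ₂λ₃λ₀ (q·n₁)² + λ₃λ₀λ₁ (q·n₂)² + λ₀λ₁λ₂ (q·n₃)²] dx ≥ C ∫_{K̂} |q|² dx. -/

import Mathlib

open MeasureTheory Finset

noncomputable section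

/-- Points of `ℝ³`. -/
abbrev V3 := Fin 3 → ℝ

/-- Euclidean dot product on `ℝ³`. -/
def dot3 (a b : V3) : ℝ := ∑ i, a i * b i

/-- Euclidean norm on `ℝ³`. -/
def norm3 (a : V3) : ℝ := Real.sqrt (∑ i, (a i) ^ 2)

/-- `L²` norm (w.r.t. Lebesgue measure, Euclidean pointwise norm) of a vector
field over a set `K ⊆ ℝ³`. -/
def L2norm (K : Set V3) (f : V3 → V3) : ℝ :=
  Real.sqrt (∫ x in K, ∑ i, (f x i) ^ 2)

/-- Vertices of the reference tetrahedron: `v̂₀ = 0`, `v̂ⱼ = eⱼ` for `j = 1,2,3`. -/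
def refVert (j : Fin 4) : V3 := fun i => if (i : ℕ) + 1 = (j : ℕ) then 1 else 0

/-- The reference tetrahedron `K̂`, the convex hull of `0, e₁, e₂, e₃`. -/
def refTet : Set V3 := convexHull ℝ (Set.range refVert)

/-- Barycentric coordinate functions of the reference tetrahedron. -/
def refLambda (j : Fin 4) (x : V3) : ℝ :=
  if (j : ℕ) = 0 then 1 - ∑ i, x i else dot3 (refVert j) x

/-- Gradient of the `j`-th reference barycentric coordinate. -/
def refGrad (j : Fin 4) : V3 := if (j : ℕ) = 0 then (fun _ => -1) else refVert j

/-- Unit outward normal to the face `F̂ⱼ = {x ∈ K̂ : λ̂ⱼ(x) = 0}` of the reference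
tetrahedron: the negatively oriented normalized gradient of `λ̂ⱼ`. -/
def refNormal (j : Fin 4) : V3 := (norm3 (refGrad j))⁻¹ • (-(refGrad j))

/-- Unit tangent vector of the edge from vertex `0` to vertex `i` (`i = 1,2,3`)
of the reference tetrahedron. -/
def refTangent (i : Fin 3) : V3 :=
  (norm3 (refVert i.succ - refVert 0))⁻¹ • (refVert i.succ - refVert 0)

/-- The `H(curl)` bubble functions `bᵢ^curl = (∏_{k ≠ i} λ̂ₖ) n̂ᵢ`, `i = 1,2,3`, on
the reference tetrahedron (indexing: `i : Fin 3` stands for the index `i+1`). -/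
def refBubbleCurl (i : Fin 3) (x : V3) : V3 :=
  (∏ k ∈ Finset.univ.erase i.succ, refLambda k x) • refNormal i.succ

/-- The `H(div)` bubble functions `bᵢ^div = λ̂₀ λ̂ᵢ t₀ᵢ`, `i = 1,2,3`, on the
reference tetrahedron. -/
def refBubbleDiv (i : Fin 3) (x : V3) : V3 :=
  (refLambda 0 x * refLambda i.succ x) • refTangent i

end

section Geometry

/-- The open interior region of the reference tetrahedron. -/
def refOpen : Set V3 := {x | (∀ i, 0 < x i) ∧ ∑ i, x i < 1}

lemma isOpen_refOpen : IsOpen refOpen := by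
  have h1 : IsOpen {x : V3 | ∀ i, 0 < x i} := by
    have : {x : V3 | ∀ i, 0 < x i} = ⋂ i, {x : V3 | 0 < x i} := by
      ext x; simp [Set.mem_iInter]
    rw [this]
    exact isOpen_iInter_of_finite fun i =>
      isOpen_lt continuous_const (continuous_apply i)
  have h2 : IsOpen {x : V3 | ∑ i, x i < 1} :=
    isOpen_lt (by continuity) continuous_const
  exact h1.inter h2

lemma refOpen_nonempty : refOpen.Nonempty := by
  refine ⟨fun _ => 1/8, fun i => by norm_num, ?_⟩
  simp [Fin.sum_univ_three]; norm_num

lemma refTet_subset : refTet ⊆ {x : V3 | (∀ i, 0 ≤ x i) ∧ ∑ i, x i ≤ 1} := by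
  apply convexHull_min
  · rintro _ ⟨j, rfl⟩
    constructor
    · intro i; unfold refVert; split <;> norm_num
    · fin_cases j <;> simp +decide [refVert, Fin.sum_univ_three]
  · rintro x ⟨hx1, hx2⟩ y ⟨hy1, hy2⟩ a b ha hb hab
    constructor
    · intro i
      have := hx1 i; have := hy1 i
      simp only [Pi.add_apply, Pi.smul_apply, smul_eq_mul]
      positivity
    · simp only [Pi.add_apply, Pi.smul_apply, smul_eq_mul]
      rw [Finset.sum_add_distrib, ← Finset.mul_sum, ← Finset.mul_sum]
      nlinarith

lemma refOpen_subset_refTet : refOpen ⊆ refTet := by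
  rintro x ⟨hx1, hx2⟩
  have h0 := hx1 0; have h1 := hx1 1; have h2 := hx1 2
  rw [Fin.sum_univ_three] at hx2
  have hw : ∀ j : Fin 4, 0 ≤ refLambda j x := by
    intro j
    fin_cases j <;>
      simp +decide [refLambda, dot3, refVert, Fin.sum_univ_three] <;> linarith
  have hws : ∑ j : Fin 4, refLambda j x = 1 := by
    simp +decide [refLambda, dot3, refVert, Fin.sum_univ_four, Fin.sum_univ_three]
    ring
  have hx : x = Finset.univ.centerMass (fun j => refLambda j x) refVert := by
    rw [Finset.centerMass, hws]
    funext i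
    simp only [inv_one, one_smul, Finset.sum_apply, Pi.smul_apply, smul_eq_mul]
    fin_cases i <;>
      simp +decide [refLambda, dot3, refVert, Fin.sum_univ_four, Fin.sum_univ_three]
  rw [hx]
  exact Finset.centerMass_mem_convexHull _ (fun j _ => hw j) (by rw [hws]; norm_num)
    (fun j _ => Set.mem_range_self j)

lemma refTet_isCompact : IsCompact refTet :=
  (Set.finite_range refVert).isCompact_convexHull ℝ

lemma refTet_measurableSet : MeasurableSet refTet :=
  refTet_isCompact.isClosed.measurableSet

lemma refLambda_continuous (j : Fin 4) : Continuous (refLambda j) := by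
  unfold refLambda
  split
  · continuity
  · unfold dot3; continuity

lemma refLambda_mem (j : Fin 4) {x : V3} (hx : x ∈ refTet) :
    0 ≤ refLambda j x ∧ refLambda j x ≤ 1 := by
  obtain ⟨h1, h2⟩ := refTet_subset hx
  have h0 := h1 0; have h1' := h1 1; have h2' := h1 2
  rw [Fin.sum_univ_three] at h2
  fin_cases j <;>
    simp +decide [refLambda, dot3, refVert, Fin.sum_univ_three] <;>
    constructor <;> linarith

end Geometry
section Integration
open MeasureTheory

lemma integrableOn_refTet {f : V3 → ℝ} (hf : Continuous f) : IntegrableOn f refTet :=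
  hf.continuousOn.integrableOn_compact refTet_isCompact

/-- The full bubble weight `λ₀λ₁λ₂λ₃`. -/
def bw (x : V3) : ℝ := ∏ j : Fin 4, refLambda j x

lemma bw_continuous : Continuous bw :=
  continuous_finset_prod _ fun j _ => refLambda_continuous j

lemma bw_nonneg {x : V3} (hx : x ∈ refTet) : 0 ≤ bw x :=
  Finset.prod_nonneg fun j _ => (refLambda_mem j hx).1

lemma bw_pos {x : V3} (hx : x ∈ refOpen) : 0 < bw x := by
  obtain ⟨hx1, hx2⟩ := hx
  have h0 := hx1 0; have h1 := hx1 1; have h2 := hx1 2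
  rw [Fin.sum_univ_three] at hx2
  apply Finset.prod_pos
  intro j _
  fin_cases j <;>
    simp +decide [refLambda, dot3, refVert, Fin.sum_univ_three] <;> linarith

lemma integral_pos_of_cont {f : V3 → ℝ} (hf : Continuous f)
    (h0 : ∀ x ∈ refTet, 0 ≤ f x) {x₀ : V3} (hx₀ : x₀ ∈ refOpen) (hfx₀ : 0 < f x₀) :
    0 < ∫ x in refTet, f x := by
  set U := refOpen ∩ {x | f x₀ / 2 < f x} with hUdef
  have hU : IsOpen U := isOpen_refOpen.inter (isOpen_lt continuous_const hf)
  have hx₀U : x₀ ∈ U := ⟨hx₀, by simp only [Set.mem_setOf_eq]; linarith⟩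
  have hUT : U ⊆ refTet := fun x hx => refOpen_subset_refTet hx.1
  have hμU_pos : 0 < volume U := hU.measure_pos volume ⟨x₀, hx₀U⟩
  have hμU_fin : volume U ≠ ⊤ :=
    ((measure_mono hUT).trans_lt refTet_isCompact.measure_lt_top).ne
  have hfi : IntegrableOn f refTet := integrableOn_refTet hf
  have step1 : ∫ x in U, f x ≤ ∫ x in refTet, f x := by
    apply setIntegral_mono_set hfi
    · exact ae_restrict_of_forall_mem refTet_measurableSet h0
    · exact Filter.Eventually.of_forall fun x hx => hUT hx
  have step2 : f x₀/2 * (volume U).toReal ≤ ∫ x in U, f x :=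
    setIntegral_ge_of_const_le_real hU.measurableSet hμU_fin (fun x hx => hx.2.le)
      (hfi.mono_set hUT)
  have hpos : 0 < f x₀/2 * (volume U).toReal :=
    mul_pos (by linarith) (ENNReal.toReal_pos hμU_pos.ne' hμU_fin)
  linarith

lemma mvpoly_eq_zero_of_eqOn_refOpen {p : MvPolynomial (Fin 3) ℝ}
    (h : ∀ x ∈ refOpen, MvPolynomial.eval x p = 0) : p = 0 := by
  obtain ⟨x₀, hx₀⟩ := refOpen_nonempty
  have han : AnalyticOnNhd ℝ (fun x : V3 => MvPolynomial.eval x p) Set.univ :=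
    AnalyticOnNhd.eval_mvPolynomial p
  have hev : (fun x : V3 => MvPolynomial.eval x p) =ᶠ[nhds x₀] 0 := by
    filter_upwards [isOpen_refOpen.mem_nhds hx₀] with x hx
    exact h x hx
  have hz := han.eqOn_zero_of_preconnected_of_eventuallyEq_zero
    isPreconnected_univ (Set.mem_univ x₀) hev
  apply MvPolynomial.funext
  intro x
  simpa using hz (Set.mem_univ x)

lemma integral_sq_pos {w : V3 → ℝ} (hwc : Continuous w) (hw0 : ∀ x ∈ refTet, 0 ≤ w x)
    (hwO : ∀ x ∈ refOpen, 0 < w x) {p : MvPolynomial (Fin 3) ℝ} (hp : p ≠ 0) :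
    0 < ∫ x in refTet, w x * (MvPolynomial.eval x p)^2 := by
  have hpc : Continuous fun x : V3 => MvPolynomial.eval x p :=
    MvPolynomial.continuous_eval p
  obtain ⟨x₀, hx₀, hp₀⟩ : ∃ x₀ ∈ refOpen, MvPolynomial.eval x₀ p ≠ 0 := by
    by_contra hc; push_neg at hc; exact hp (mvpoly_eq_zero_of_eqOn_refOpen hc)
  refine integral_pos_of_cont (by continuity) (fun x hx => ?_) hx₀ ?_
  · have := hw0 x hx; positivity
  · have := hwO x₀ hx₀; positivity

lemma quad_integral_eq {n : ℕ} (P : Fin n → V3 → ℝ) (hP : ∀ i, Continuous (P i))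
    {w : V3 → ℝ} (hw : Continuous w) (c : Fin n → ℝ) :
    ∫ x in refTet, w x * (∑ i, c i * P i x)^2
      = ∑ i, ∑ j, (c i * c j) * ∫ x in refTet, w x * (P i x * P j x) := by
  have hpt : ∀ x : V3, w x * (∑ i, c i * P i x)^2
      = ∑ i, ∑ j, (c i * c j) * (w x * (P i x * P j x)) := by
    intro x
    rw [sq, Finset.sum_mul_sum, Finset.mul_sum]
    refine Finset.sum_congr rfl fun i _ => ?_
    rw [Finset.mul_sum]
    refine Finset.sum_congr rfl fun j _ => ?_
    ring
  simp only [hpt]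
  rw [integral_finset_sum]
  · refine Finset.sum_congr rfl fun i _ => ?_
    rw [integral_finset_sum]
    · exact Finset.sum_congr rfl fun j _ => integral_const_mul _ _
    · intro j _
      exact (integrableOn_refTet (hw.mul ((hP i).mul (hP j)))).const_mul _
  · intro i _
    apply integrable_finset_sum
    intro j _
    exact (integrableOn_refTet (hw.mul ((hP i).mul (hP j)))).const_mul _

lemma quad_cont {n : ℕ} (P : Fin n → V3 → ℝ) (hP : ∀ i, Continuous (P i))
    {w : V3 → ℝ} (hw : Continuous w) :
    Continuous fun c : Fin n → ℝ => ∫ x in refTet, w x * (∑ i, c i * P i x)^2 := by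
  simp only [quad_integral_eq P hP hw]
  exact continuous_finset_sum _ fun i _ => continuous_finset_sum _ fun j _ =>
    ((continuous_apply i).mul (continuous_apply j)).mul continuous_const

end Integration
section Core
open MeasureTheory MvPolynomial
set_option maxHeartbeats 1000000
set_option synthInstance.maxHeartbeats 400000

lemma setint_congr {f g : V3 → ℝ} (h : ∀ x, f x = g x) :
    ∫ x in refTet, f x = ∫ x in refTet, g x :=
  integral_congr_ae (Filter.EventuallyEq.of_eq (funext h))

lemma scalar_core (d : ℕ) : ∃ C : ℝ, 0 < C ∧ ∀ p : MvPolynomial (Fin 3) ℝ,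
    p.totalDegree ≤ d →
    C * ∫ x in refTet, (eval x p)^2 ≤ ∫ x in refTet, bw x * (eval x p)^2 := by
  classical
  set E := MvPolynomial.restrictTotalDegree (Fin 3) ℝ d with hE
  haveI : Nontrivial E := by
    refine ⟨⟨1, ?_⟩, 0, ?_⟩
    · rw [MvPolynomial.mem_restrictTotalDegree]
      simp [MvPolynomial.totalDegree_one]
    · intro h
      have h1 : (1 : MvPolynomial (Fin 3) ℝ) = 0 := congrArg Subtype.val h
      simpa using h1
  set n := Module.finrank ℝ E with hn'
  have hn : 0 < n := Module.finrank_pos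
  haveI : Nontrivial (Fin n → ℝ) := by
    refine ⟨0, fun _ => 1, fun h => ?_⟩
    have := congrFun h ⟨0, hn⟩
    norm_num at this
  let B : Module.Basis (Fin n) ℝ E := Module.finBasis ℝ E
  set P : Fin n → V3 → ℝ := fun i x => eval x ((B i : MvPolynomial (Fin 3) ℝ)) with hP'
  have hP : ∀ i, Continuous (P i) := fun i => MvPolynomial.continuous_eval _
  set pol : (Fin n → ℝ) → MvPolynomial (Fin 3) ℝ :=
    fun c => ((∑ i, c i • B i : E) : MvPolynomial (Fin 3) ℝ) with hpol'
  have heval : ∀ (c : Fin n → ℝ) (x : V3), ∑ i, c i * P i x = eval x (pol c) := by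
    intro c x
    rw [hpol']
    push_cast
    rw [map_sum]
    refine Finset.sum_congr rfl fun i _ => ?_
    rw [MvPolynomial.smul_eq_C_mul, map_mul, MvPolynomial.eval_C, hP']
  have hpolne : ∀ c : Fin n → ℝ, c ≠ 0 → pol c ≠ 0 := by
    intro c hc h0
    rw [hpol'] at h0
    rw [ZeroMemClass.coe_eq_zero] at h0
    exact hc (funext fun i => Fintype.linearIndependent_iff.1 B.linearIndependent c h0 i)
  set G : (Fin n → ℝ) → ℝ :=
    fun c => ∫ x in refTet, bw x * (∑ i, c i * P i x)^2 with hG'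
  set H : (Fin n → ℝ) → ℝ :=
    fun c => ∫ x in refTet, (1:ℝ) * (∑ i, c i * P i x)^2 with hH'
  have hGc : Continuous G := quad_cont P hP bw_continuous
  have hHc : Continuous H := quad_cont P hP continuous_const
  have hGeq : ∀ c, G c = ∫ x in refTet, bw x * (eval x (pol c))^2 := by
    intro c; rw [hG']; exact setint_congr fun x => by rw [heval]
  have hHeq : ∀ c, H c = ∫ x in refTet, (1:ℝ) * (eval x (pol c))^2 := by
    intro c; rw [hH']; exact setint_congr fun x => by rw [heval]
  have hGpos : ∀ c : Fin n → ℝ, c ≠ 0 → 0 < G c := by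
    intro c hc
    rw [hGeq]
    exact integral_sq_pos bw_continuous (fun x hx => bw_nonneg hx)
      (fun x hx => bw_pos hx) (hpolne c hc)
  have hHpos : ∀ c : Fin n → ℝ, c ≠ 0 → 0 < H c := by
    intro c hc
    rw [hHeq]
    exact integral_sq_pos continuous_const (fun x _ => zero_le_one)
      (fun x _ => zero_lt_one) (hpolne c hc)
  -- scaling
  have hscale : ∀ (w : V3 → ℝ) (t : ℝ) (c : Fin n → ℝ),
      (∫ x in refTet, w x * (∑ i, (t • c) i * P i x)^2)
        = t^2 * ∫ x in refTet, w x * (∑ i, c i * P i x)^2 := by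
    intro w t c
    rw [← integral_const_mul]
    apply setint_congr
    intro x
    simp only [Pi.smul_apply, smul_eq_mul]
    rw [show ∑ i, t * c i * P i x = t * ∑ i, c i * P i x by
      rw [Finset.mul_sum]; exact Finset.sum_congr rfl fun i _ => by ring]
    ring
  -- extrema on the sphere
  have hsphne : (Metric.sphere (0 : Fin n → ℝ) 1).Nonempty :=
    NormedSpace.sphere_nonempty.2 zero_le_one
  obtain ⟨c₁, hc₁, hGmin⟩ := (isCompact_sphere (0 : Fin n → ℝ) 1).exists_isMinOn
    hsphne hGc.continuousOn
  obtain ⟨c₂, hc₂, hHmax⟩ := (isCompact_sphere (0 : Fin n → ℝ) 1).exists_isMaxOn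
    hsphne hHc.continuousOn
  have hsph_ne_zero : ∀ c : Fin n → ℝ, c ∈ Metric.sphere (0 : Fin n → ℝ) 1 → c ≠ 0 := by
    intro c hc h0
    rw [mem_sphere_zero_iff_norm] at hc
    rw [h0] at hc; simp at hc
  have hG1 : 0 < G c₁ := hGpos c₁ (hsph_ne_zero c₁ hc₁)
  have hH2 : 0 < H c₂ := lt_of_lt_of_le (hHpos c₁ (hsph_ne_zero c₁ hc₁)) (hHmax hc₁)
  refine ⟨G c₁ / H c₂, div_pos hG1 hH2, ?_⟩
  intro p hdeg
  by_cases hp : p = 0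
  · subst hp; simp
  · set pE : E := ⟨p, (MvPolynomial.mem_restrictTotalDegree _ _ _).2 hdeg⟩ with hpE'
    set c : Fin n → ℝ := fun i => B.repr pE i with hc'
    have hcne : c ≠ 0 := by
      intro h0
      apply hp
      have hrepr : B.repr pE = 0 := Finsupp.ext fun i => congrFun h0 i
      have hpE0 : pE = 0 := (LinearEquiv.map_eq_zero_iff B.repr).1 hrepr
      have hco : (pE : MvPolynomial (Fin 3) ℝ) = 0 := by rw [hpE0]; rfl
      simpa [hpE'] using hco
    have hpolc : pol c = p := by
      rw [hpol']
      have hsum : (∑ i, c i • B i : E) = pE := B.sum_repr pE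
      show ((∑ i, c i • B i : E) : MvPolynomial (Fin 3) ℝ) = p
      rw [hsum]
    have ht : 0 < ‖c‖ := norm_pos_iff.2 hcne
    set c' : Fin n → ℝ := ‖c‖⁻¹ • c with hcdef
    have hc'sph : c' ∈ Metric.sphere (0 : Fin n → ℝ) 1 := by
      rw [mem_sphere_zero_iff_norm, hcdef]
      rw [norm_smul]
      simp [abs_of_pos (inv_pos.2 ht), inv_mul_cancel₀ ht.ne']
    have hcc : c = ‖c‖ • c' := by rw [hcdef, smul_inv_smul₀ ht.ne']
    have hGsc : G c = ‖c‖^2 * G c' := by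
      have h1 : G (‖c‖ • c') = ‖c‖^2 * G c' := hscale bw ‖c‖ c'
      rw [← hcc] at h1; exact h1
    have hHsc : H c = ‖c‖^2 * H c' := by
      have h1 : H (‖c‖ • c') = ‖c‖^2 * H c' := hscale (fun _ => (1:ℝ)) ‖c‖ c'
      rw [← hcc] at h1; exact h1
    have key : (G c₁ / H c₂) * H c ≤ G c := by
      rw [hGsc, hHsc]
      have h1 : H c' ≤ H c₂ := hHmax hc'sph
      have h2 : G c₁ ≤ G c' := hGmin hc'sph
      have ht2 : (0:ℝ) ≤ ‖c‖^2 := sq_nonneg _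
      have step : (G c₁ / H c₂) * (‖c‖^2 * H c') ≤ (G c₁ / H c₂) * (‖c‖^2 * H c₂) := by
        apply mul_le_mul_of_nonneg_left _ (le_of_lt (div_pos hG1 hH2))
        exact mul_le_mul_of_nonneg_left h1 ht2
      have step2 : (G c₁ / H c₂) * (‖c‖^2 * H c₂) = ‖c‖^2 * G c₁ := by
        field_simp
      calc (G c₁ / H c₂) * (‖c‖^2 * H c') ≤ (G c₁ / H c₂) * (‖c‖^2 * H c₂) := step
        _ = ‖c‖^2 * G c₁ := step2
        _ ≤ ‖c‖^2 * G c' := by nlinarith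
    have hHc_eq : H c = ∫ x in refTet, (eval x p)^2 := by
      rw [hHeq, hpolc]
      exact setint_congr fun x => by ring
    have hGc_eq : G c = ∫ x in refTet, bw x * (eval x p)^2 := by
      rw [hGeq, hpolc]
    rw [← hHc_eq, ← hGc_eq]
    exact key

end Core
section Main
open MeasureTheory MvPolynomial

lemma refNormal_succ_eq (i : Fin 3) :
    refNormal i.succ = fun j => if j = i then (-1:ℝ) else 0 := by
  fin_cases i <;> funext j <;> fin_cases j <;>
    simp +decide [refNormal, refGrad, refVert, norm3, Fin.sum_univ_three, Real.sqrt_one]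

theorem ref_curl_test_lower_bound_aux :
    ∀ r : ℕ, 1 ≤ r → ∃ C : ℝ, 0 < C ∧
      ∀ q : Fin 3 → MvPolynomial (Fin 3) ℝ, (∀ i, (q i).totalDegree ≤ r - 1) →
        C * ∫ x in refTet, ∑ i, (MvPolynomial.eval x (q i)) ^ 2 ≤
          ∫ x in refTet,
            dot3 (∑ i, dot3 (refNormal i.succ) (fun j => MvPolynomial.eval x (q j)) •
                refBubbleCurl i x)
              (fun j => MvPolynomial.eval x (q j)) := by
  intro r hr
  obtain ⟨C, hC, hcore⟩ := scalar_core (r - 1)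
  refine ⟨C, hC, ?_⟩
  intro q hq
  have hacont : ∀ j : Fin 3, Continuous fun x : V3 => eval x (q j) :=
    fun j => MvPolynomial.continuous_eval _
  have hwcont : ∀ i : Fin 3,
      Continuous fun x : V3 => ∏ k ∈ Finset.univ.erase i.succ, refLambda k x :=
    fun i => continuous_finset_prod _ fun k _ => refLambda_continuous k
  have hwnn : ∀ (i : Fin 3), ∀ x ∈ refTet,
      0 ≤ ∏ k ∈ Finset.univ.erase i.succ, refLambda k x :=
    fun i x hx => Finset.prod_nonneg fun k _ => (refLambda_mem k hx).1
  have hbw_le : ∀ (i : Fin 3), ∀ x ∈ refTet,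
      bw x ≤ ∏ k ∈ Finset.univ.erase i.succ, refLambda k x := by
    intro i x hx
    have hfac : bw x = refLambda i.succ x * ∏ k ∈ Finset.univ.erase i.succ, refLambda k x :=
      (Finset.mul_prod_erase Finset.univ _ (Finset.mem_univ i.succ)).symm
    rw [hfac]
    have h1 := refLambda_mem i.succ hx
    nlinarith [hwnn i x hx]
  have hpoint : ∀ x : V3,
      dot3 (∑ i, dot3 (refNormal i.succ) (fun j => MvPolynomial.eval x (q j)) •
          refBubbleCurl i x) (fun j => MvPolynomial.eval x (q j))
        = ∑ i : Fin 3, (∏ k ∈ Finset.univ.erase i.succ, refLambda k x) *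
            (eval x (q i))^2 := by
    intro x
    simp only [dot3, refBubbleCurl, refNormal_succ_eq, Fin.sum_univ_three,
      Finset.sum_apply, Pi.smul_apply, smul_eq_mul]
    simp +decide
    ring
  have hmono : ∫ x in refTet, bw x * ∑ i : Fin 3, (eval x (q i))^2
      ≤ ∫ x in refTet, ∑ i : Fin 3,
          (∏ k ∈ Finset.univ.erase i.succ, refLambda k x) * (eval x (q i))^2 := by
    apply setIntegral_mono_on
    · exact integrableOn_refTet
        (bw_continuous.mul (continuous_finset_sum _ fun i _ => (hacont i).pow 2))
    · exact integrableOn_refTet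
        (continuous_finset_sum _ fun i _ => (hwcont i).mul ((hacont i).pow 2))
    · exact refTet_measurableSet
    · intro x hx
      rw [Finset.mul_sum]
      exact Finset.sum_le_sum fun i _ =>
        mul_le_mul_of_nonneg_right (hbw_le i x hx) (sq_nonneg _)
  have hsplit1 : ∫ x in refTet, bw x * ∑ i : Fin 3, (eval x (q i))^2
      = ∑ i : Fin 3, ∫ x in refTet, bw x * (eval x (q i))^2 := by
    rw [← integral_finset_sum]
    · exact setint_congr fun x => by rw [Finset.mul_sum]
    · intro i _
      exact integrableOn_refTet (bw_continuous.mul ((hacont i).pow 2))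
  have hsplit2 : ∫ x in refTet, ∑ i : Fin 3, (eval x (q i))^2
      = ∑ i : Fin 3, ∫ x in refTet, (eval x (q i))^2 :=
    integral_finset_sum _ fun i _ => integrableOn_refTet ((hacont i).pow 2)
  calc C * ∫ x in refTet, ∑ i : Fin 3, (eval x (q i))^2
      = ∑ i : Fin 3, C * ∫ x in refTet, (eval x (q i))^2 := by
        rw [hsplit2, Finset.mul_sum]
    _ ≤ ∑ i : Fin 3, ∫ x in refTet, bw x * (eval x (q i))^2 :=
        Finset.sum_le_sum fun i _ => hcore (q i) (hq i)
    _ = ∫ x in refTet, bw x * ∑ i : Fin 3, (eval x (q i))^2 := hsplit1.symm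
    _ ≤ ∫ x in refTet, ∑ i : Fin 3,
          (∏ k ∈ Finset.univ.erase i.succ, refLambda k x) * (eval x (q i))^2 := hmono
    _ = _ := (setint_congr hpoint).symm

end Main

/-- **Explicit test-function lower bound on the reference tetrahedron, curl
case** (inequality (4.7) in the proof of Lemma 4.1): for every `r ≥ 1` there is
`C > 0`, depending only on `r`, such that for every `q ∈ P_{r-1}(K̂)³`, the
function `v = ∑ᵢ (nᵢ·q) bᵢ^curl` satisfies `∫_{K̂} v·q ≥ C ∫_{K̂} |q|²`. -/
theorem ref_curl_test_lower_bound :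
    ∀ r : ℕ, 1 ≤ r → ∃ C : ℝ, 0 < C ∧
      ∀ q : Fin 3 → MvPolynomial (Fin 3) ℝ, (∀ i, (q i).totalDegree ≤ r - 1) →
        C * ∫ x in refTet, ∑ i, (MvPolynomial.eval x (q i)) ^ 2 ≤
          ∫ x in refTet,
            dot3 (∑ i, dot3 (refNormal i.succ) (fun j => MvPolynomial.eval x (q j)) •
                refBubbleCurl i x)
              (fun j => MvPolynomial.eval x (q j)) := by
  exact ref_curl_test_lower_bound_aux
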